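/- arXiv:2410.10224 — 3 statements merged into one kernel-verified Lean document; each statement's English description precedes it below -/
import Mathlib

section
/- Let F be a field, let P be a nonzero polynomial over F, and let d, t be natural numbers with natDegree P ≤ d. Then the rank of the Toeplitz matrix M_{P,t}, viewed as a (d+t+1)×(t+1) matrix over F, equals t + 1 (i.e., M_{P,t} has full column rank). -/
/-- The Toeplitz matrix of a polynomial `P`, of size `(d+t+1) × (t+1)`:
`M(i,j) = coeff P (i - j)` if `j ≤ i`, and `0` otherwise. -/
def toeplitz {R : Type*} [CommRing R] (P : Polynomial R) (d t : ℕ) :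
    Matrix (Fin (d + t + 1)) (Fin (t + 1)) R :=
  fun i j => if (j : ℕ) ≤ (i : ℕ) then P.coeff ((i : ℕ) - (j : ℕ)) else 0

theorem toeplitz_rank_eq {F : Type*} [Field F]
    (P : Polynomial F) (d t : ℕ) (hP : P ≠ 0) (hPd : P.natDegree ≤ d) :
    (toeplitz P d t).rank = t + 1 := by
  have hinj : Function.Injective (toeplitz P d t).mulVecLin := by
    rw [← LinearMap.ker_eq_bot, LinearMap.ker_eq_bot']
    intro v hv
    set Q : Polynomial F := ∑ j : Fin (t + 1), Polynomial.monomial (j : ℕ) (v j) with hQ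
    have hQcoeff : ∀ k : ℕ, Q.coeff k = if h : k < t + 1 then v ⟨k, h⟩ else 0 := by
      intro k
      rw [hQ, Polynomial.finset_sum_coeff]
      simp only [Polynomial.coeff_monomial]
      split
      · next h =>
        rw [Finset.sum_eq_single (⟨k, h⟩ : Fin (t + 1))]
        · simp
        · intro b _ hb
          simp only [ite_eq_right_iff]
          intro hbk
          exact absurd (Fin.ext hbk) hb
        · simp
      · next h =>
        apply Finset.sum_eq_zero
        intro j _
        simp only [ite_eq_right_iff]
        intro hj
        omega
    have hQdeg : Q.natDegree ≤ t := by
      apply Polynomial.natDegree_sum_le_of_forall_le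
      intro j _
      exact le_trans (Polynomial.natDegree_monomial_le _) (by omega)
    -- key: for any i : Fin (d+t+1), coeff (P*Q) i = (M *ᵥ v) i
    have hkey : ∀ i : Fin (d + t + 1), (P * Q).coeff (i : ℕ) =
        ((toeplitz P d t).mulVec v) i := by
      intro i
      have hcm : (P * Q).coeff (i : ℕ) =
          ∑ k ∈ Finset.range ((i : ℕ) + 1), P.coeff ((i : ℕ) - k) * Q.coeff k := by
        rw [mul_comm P Q, Polynomial.coeff_mul, Finset.Nat.sum_antidiagonal_eq_sum_range_succ_mk]
        exact Finset.sum_congr rfl fun k _ => mul_comm _ _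
      have h0 : ∑ k ∈ Finset.range ((i : ℕ) + 1), P.coeff ((i : ℕ) - k) * Q.coeff k =
          ∑ k ∈ Finset.range ((i : ℕ) + 1),
            (if k ≤ (i : ℕ) then P.coeff ((i : ℕ) - k) else 0) * Q.coeff k := by
        apply Finset.sum_congr rfl
        intro k hk
        simp at hk
        rw [if_pos (by omega)]
      have h1 : ∑ k ∈ Finset.range ((i : ℕ) + 1),
            (if k ≤ (i : ℕ) then P.coeff ((i : ℕ) - k) else 0) * Q.coeff k =
          ∑ k ∈ Finset.range (d + t + 1),
            (if k ≤ (i : ℕ) then P.coeff ((i : ℕ) - k) else 0) * Q.coeff k := by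
        apply Finset.sum_subset (Finset.range_subset_range.2 (by omega : (i : ℕ) + 1 ≤ d + t + 1))
        intro k _ hk
        simp at hk
        rw [if_neg (by omega), zero_mul]
      have h2 : ∑ k ∈ Finset.range (t + 1),
            (if k ≤ (i : ℕ) then P.coeff ((i : ℕ) - k) else 0) * Q.coeff k =
          ∑ k ∈ Finset.range (d + t + 1),
            (if k ≤ (i : ℕ) then P.coeff ((i : ℕ) - k) else 0) * Q.coeff k := by
        apply Finset.sum_subset (Finset.range_subset_range.2 (by omega : t + 1 ≤ d + t + 1))
        intro k _ hk
        simp at hk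
        rw [hQcoeff, dif_neg (by omega), mul_zero]
      rw [hcm, h0, h1, ← h2]
      have h3 : ((toeplitz P d t).mulVec v) i = ∑ j : Fin (t + 1), toeplitz P d t i j * v j := by
        simp [Matrix.mulVec, dotProduct]
      rw [h3, ← Fin.sum_univ_eq_sum_range
        (fun k => (if k ≤ (i : ℕ) then P.coeff ((i : ℕ) - k) else 0) * Q.coeff k)]
      apply Finset.sum_congr rfl
      intro j _
      rw [hQcoeff, dif_pos j.isLt]
      simp [toeplitz]
    have hPQ : P * Q = 0 := by
      ext n
      rw [Polynomial.coeff_zero]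
      by_cases hn : n < d + t + 1
      · have := hkey ⟨n, hn⟩
        simp only [Matrix.mulVecLin_apply] at hv
        rw [hv] at this
        simpa using this
      · apply Polynomial.coeff_eq_zero_of_natDegree_lt
        calc (P * Q).natDegree ≤ P.natDegree + Q.natDegree := Polynomial.natDegree_mul_le
          _ ≤ d + t := by omega
          _ < n := by omega
    have hQ0 : Q = 0 := by
      rcases mul_eq_zero.1 hPQ with h | h
      · exact absurd h hP
      · exact h
    funext j
    have := hQcoeff (j : ℕ)
    rw [hQ0, dif_pos j.isLt] at this
    simpa using this.symm
  rw [Matrix.rank, LinearMap.finrank_range_of_inj hinj]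
  simp
end

section
/- Let P be a nonzero polynomial over the field F₂ (ZMod 2) with natDegree P = d, let t be a natural number, and set n = d + t + 1. Then the minimum, over all nonzero polynomials K with P ∣ K and natDegree K < n, of the Hamming weight of K equals n minus the maximum, over all nonzero vectors q : Fin (t+1) → F₂, of the number of indices i ∈ Fin n with (M_{P,t} · q) i = 0 (the number of satisfied constraints of the affine system M_{P,t}·x = 0 under the assignment q). -/
open Polynomial Finset
set_option maxRecDepth 4000

lemma mulVec_toeplitz {R : Type*} [CommRing R] (P Q : Polynomial R) (d t : ℕ)
    (hQ : Q.natDegree ≤ t) (i : Fin (d + t + 1)) :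
    (toeplitz P d t).mulVec (fun j : Fin (t+1) => Q.coeff j) i = (P * Q).coeff i := by
  have hn : (i : ℕ) < d + t + 1 := i.isLt
  have key : ∀ m : ℕ, t + 1 ≤ m → (toeplitz P d t).mulVec (fun j : Fin (t+1) => Q.coeff j) i
      = ∑ j ∈ range m, if (j : ℕ) ≤ (i : ℕ) then Q.coeff j * P.coeff ((i:ℕ) - j) else 0 := by
    intro m hm
    rw [Matrix.mulVec, dotProduct]
    have : ∀ j : Fin (t+1), toeplitz P d t i j * Q.coeff j
        = (if (j:ℕ) ≤ (i:ℕ) then Q.coeff j * P.coeff ((i:ℕ) - j) else 0) := by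
      intro j
      simp only [toeplitz, ite_mul, zero_mul]
      split <;> ring_nf
    rw [Finset.sum_congr rfl (fun j _ => this j), Fin.sum_univ_eq_sum_range (fun j => if j ≤ (i:ℕ) then Q.coeff j * P.coeff ((i:ℕ)-j) else 0) (t+1)]
    apply Finset.sum_subset (Finset.range_subset_range.2 hm)
    intro j _ hj
    have : t < j := by simpa using hj
    have : Q.coeff j = 0 := coeff_eq_zero_of_natDegree_lt (lt_of_le_of_lt hQ this)
    simp [this]
  rw [mul_comm, coeff_mul, Finset.Nat.sum_antidiagonal_eq_sum_range_succ_mk]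
  rcases le_total (t+1) ((i:ℕ)+1) with h | h
  · rw [key _ h]
    apply Finset.sum_congr rfl
    intro j hj
    have : j ≤ (i:ℕ) := by simpa [Nat.lt_succ_iff] using Finset.mem_range.1 hj
    simp [this]
  · rw [key _ le_rfl]
    rw [← Finset.sum_subset (Finset.range_subset_range.2 h) (fun j _ hj => ?_)]
    · apply Finset.sum_congr rfl
      intro j hj
      have : j ≤ (i:ℕ) := by simpa [Nat.lt_succ_iff] using Finset.mem_range.1 hj
      simp [this]
    · have : (i:ℕ) < j := by simpa using hj
      simp [Nat.not_le.2 this]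

lemma count_aux (K : Polynomial (ZMod 2)) {n : ℕ} (h : K.natDegree < n)
    (f : Fin n → ZMod 2) (hf : ∀ i : Fin n, f i = K.coeff i) :
    K.support.card + (Finset.univ.filter fun i : Fin n => f i = 0).card = n := by
  have h1 : (Finset.univ.filter fun i : Fin n => f i = 0)
      = Finset.univ.filter fun i : Fin n => K.coeff i = 0 := by
    apply Finset.filter_congr
    intro i _
    rw [hf i]
  have h2 : K.support.card = (Finset.univ.filter fun i : Fin n => ¬ K.coeff i = 0).card := by
    have hs : K.support = (range n).filter fun i => ¬ K.coeff i = 0 := by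
      ext a
      simp only [mem_support_iff, Finset.mem_filter, Finset.mem_range]
      constructor
      · intro ha
        exact ⟨lt_of_le_of_lt (le_natDegree_of_ne_zero ha) h, ha⟩
      · exact fun ha => ha.2
    rw [hs, Finset.card_filter, Finset.card_filter,
      Fin.sum_univ_eq_sum_range (fun i => if ¬ K.coeff i = 0 then 1 else 0) n]
  rw [h1, h2, add_comm, Finset.card_filter_add_card_filter_not]
  simp

lemma coeff_ofVec {t : ℕ} (q : Fin (t+1) → ZMod 2) (j : Fin (t+1)) :
    (∑ k : Fin (t+1), Polynomial.C (q k) * Polynomial.X ^ (k : ℕ)).coeff (j : ℕ) = q j := by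
  rw [finset_sum_coeff]
  rw [Finset.sum_eq_single j]
  · simp
  · intro b _ hb
    have : (j : ℕ) ≠ (b : ℕ) := fun hc => hb (Fin.ext hc.symm)
    simp [coeff_X_pow, this]
  · simp

theorem min_weight_eq_sub_max_satisfied
    (P : Polynomial (ZMod 2)) (d t : ℕ) (hP : P ≠ 0) (hPd : P.natDegree = d) :
    sInf {w : ℕ | ∃ K : Polynomial (ZMod 2), K ≠ 0 ∧ P ∣ K ∧
        K.natDegree < d + t + 1 ∧ K.support.card = w} =
      (d + t + 1) -
        sSup {s : ℕ | ∃ q : Fin (t + 1) → ZMod 2, q ≠ 0 ∧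
          (Finset.univ.filter fun i : Fin (d + t + 1) =>
            (toeplitz P d t).mulVec q i = 0).card = s} := by
  set A := {w : ℕ | ∃ K : Polynomial (ZMod 2), K ≠ 0 ∧ P ∣ K ∧
        K.natDegree < d + t + 1 ∧ K.support.card = w} with hA
  set S := {s : ℕ | ∃ q : Fin (t + 1) → ZMod 2, q ≠ 0 ∧
          (Finset.univ.filter fun i : Fin (d + t + 1) =>
            (toeplitz P d t).mulVec q i = 0).card = s} with hS
  -- the common counting step
  have main : ∀ Q : Polynomial (ZMod 2), Q ≠ 0 → Q.natDegree ≤ t →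
      (P * Q).support.card +
        (Finset.univ.filter fun i : Fin (d + t + 1) =>
          (toeplitz P d t).mulVec (fun j : Fin (t+1) => Q.coeff j) i = 0).card = d + t + 1 := by
    intro Q hQ0 hQt
    have hK0 : P * Q ≠ 0 := mul_ne_zero hP hQ0
    have hKd : (P * Q).natDegree < d + t + 1 := by
      rw [natDegree_mul hP hQ0, hPd]; omega
    have := count_aux (P * Q) hKd
      ((toeplitz P d t).mulVec (fun j : Fin (t+1) => Q.coeff j))
      (fun i => mulVec_toeplitz P Q d t hQt i)
    exact this
  have hforward : ∀ w ∈ A, ∃ s ∈ S, w + s = d + t + 1 := by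
    rintro w ⟨K, hK0, ⟨Q, rfl⟩, hKd, rfl⟩
    have hQ0 : Q ≠ 0 := right_ne_zero_of_mul hK0
    have hQt : Q.natDegree ≤ t := by
      rw [natDegree_mul hP hQ0, hPd] at hKd; omega
    have hq : (fun j : Fin (t+1) => Q.coeff j) ≠ 0 := by
      intro hc
      apply Polynomial.leadingCoeff_ne_zero.2 hQ0
      have h : Q.coeff Q.natDegree = 0 := congrFun hc ⟨Q.natDegree, by omega⟩
      rw [Polynomial.leadingCoeff]
      exact h
    exact ⟨_, ⟨_, hq, rfl⟩, main Q hQ0 hQt⟩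
  have hbackward : ∀ s ∈ S, ∃ w ∈ A, w + s = d + t + 1 := by
    rintro s ⟨q, hq, rfl⟩
    set Q := ∑ k : Fin (t+1), Polynomial.C (q k) * Polynomial.X ^ (k : ℕ) with hQdef
    have hcoeff : ∀ j : Fin (t+1), Q.coeff j = q j := fun j => coeff_ofVec q j
    have hqQ : q = fun j : Fin (t+1) => Q.coeff j := funext fun j => (hcoeff j).symm
    have hQt : Q.natDegree ≤ t := by
      apply Polynomial.natDegree_sum_le_of_forall_le
      intro k _
      exact le_trans (Polynomial.natDegree_C_mul_X_pow_le _ _) (by omega)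
    have hQ0 : Q ≠ 0 := by
      obtain ⟨j, hj⟩ := Function.ne_iff.1 hq
      intro hc
      apply hj
      rw [← hcoeff j, hc]
      exact Polynomial.coeff_zero _
    have hK0 : P * Q ≠ 0 := mul_ne_zero hP hQ0
    have hKd : (P * Q).natDegree < d + t + 1 := by
      rw [natDegree_mul hP hQ0, hPd]; omega
    refine ⟨(P * Q).support.card, ⟨P * Q, hK0, Dvd.intro Q rfl, hKd, rfl⟩, ?_⟩
    rw [hqQ]
    exact main Q hQ0 hQt
  have hAne : A.Nonempty := ⟨P.support.card, P, hP, dvd_refl P, by omega, rfl⟩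
  have hbdd : BddAbove S := by
    refine ⟨d + t + 1, ?_⟩
    rintro s ⟨q, hq, rfl⟩
    exact le_trans (Finset.card_filter_le _ _) (by simp)
  obtain ⟨s₁, hs₁S, hws₁⟩ := hforward _ (Nat.sInf_mem hAne)
  have hSne : S.Nonempty := ⟨s₁, hs₁S⟩
  have hs₀ : sSup S ∈ S := Nat.sSup_mem hSne hbdd
  obtain ⟨w₀, hw₀A, h₀⟩ := hbackward _ hs₀
  have h1 : sInf A ≤ w₀ := Nat.sInf_le hw₀A
  have h2 : s₁ ≤ sSup S := le_csSup hbdd hs₁S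
  omega
end

section
/- Let P be a nonzero polynomial over the field F₂ (ZMod 2) with natDegree P = d, let t, w be natural numbers, and set n = d + t + 1. Then there exists a nonzero polynomial K with P ∣ K, natDegree K < n, and Hamming weight of K at most w if and only if there exists a nonzero vector q : Fin (t+1) → F₂ such that the number of indices i ∈ Fin n with (M_{P,t} · q) i ≠ 0 (the number of violated constraints of the affine system M_{P,t}·x = 0 under the assignment q) is at most w. -/
lemma key (P : Polynomial (ZMod 2)) (d t : ℕ) (q : Fin (t+1) → ZMod 2) (i : Fin (d+t+1)) :
    (toeplitz P d t).mulVec q i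
      = (P * ∑ j : Fin (t+1), Polynomial.C (q j) * Polynomial.X ^ (j:ℕ)).coeff i := by
  rw [Finset.mul_sum]
  rw [Polynomial.finset_sum_coeff]
  unfold Matrix.mulVec dotProduct toeplitz
  refine Finset.sum_congr rfl fun j _ => ?_
  rw [show P * (Polynomial.C (q j) * Polynomial.X ^ (j:ℕ))
      = Polynomial.C (q j) * (P * Polynomial.X ^ (j:ℕ)) by ring]
  rw [Polynomial.coeff_C_mul, Polynomial.coeff_mul_X_pow']
  by_cases h : (j:ℕ) ≤ (i:ℕ) <;> simp [h, mul_comm]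

lemma cardlem (K : Polynomial (ZMod 2)) (n : ℕ) (h : K.natDegree < n) :
    K.support.card = (Finset.univ.filter fun i : Fin n => K.coeff i ≠ 0).card := by
  refine Finset.card_bij (fun i hi => ⟨i, ?_⟩) ?_ ?_ ?_
  · exact lt_of_le_of_lt (Polynomial.le_natDegree_of_mem_supp i hi) h
  · intro a ha; simp [Polynomial.mem_support_iff.mp ha]
  · intro a ha b hb hab; simpa using congrArg Fin.val hab
  · intro b hb
    simp only [Finset.mem_filter] at hb
    exact ⟨b, Polynomial.mem_support_iff.mpr hb.2, rfl⟩

theorem exists_low_weight_multiple_iff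
    (P : Polynomial (ZMod 2)) (d t w : ℕ) (hP : P ≠ 0) (hPd : P.natDegree = d) :
    (∃ K : Polynomial (ZMod 2), K ≠ 0 ∧ P ∣ K ∧
        K.natDegree < d + t + 1 ∧ K.support.card ≤ w) ↔
      (∃ q : Fin (t + 1) → ZMod 2, q ≠ 0 ∧
        (Finset.univ.filter fun i : Fin (d + t + 1) =>
          (toeplitz P d t).mulVec q i ≠ 0).card ≤ w) := by
  constructor
  · rintro ⟨K, hK, ⟨Q, rfl⟩, hdeg, hw⟩
    have hQ : Q ≠ 0 := by rintro rfl; simp at hK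
    have hnat : (P * Q).natDegree = d + Q.natDegree := by
      rw [Polynomial.natDegree_mul hP hQ, hPd]
    have hQt : Q.natDegree ≤ t := by omega
    refine ⟨fun j => Q.coeff j, ?_, ?_⟩
    · intro h0
      apply Polynomial.leadingCoeff_ne_zero.mpr hQ
      have := congrFun h0 ⟨Q.natDegree, by omega⟩
      simp only [Pi.zero_apply] at this
      rw [Polynomial.leadingCoeff]
      exact this
    · have hQexp : Q = ∑ j : Fin (t+1), Polynomial.C (Q.coeff j) * Polynomial.X ^ (j:ℕ) := by
        conv_lhs => rw [Polynomial.as_sum_range' Q (t+1) (by omega)]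
        rw [Fin.sum_univ_eq_sum_range (fun k => Polynomial.C (Q.coeff k) * Polynomial.X ^ k)]
        simp [Polynomial.C_mul_X_pow_eq_monomial]
      calc (Finset.univ.filter fun i : Fin (d + t + 1) =>
          (toeplitz P d t).mulVec (fun j => Q.coeff j) i ≠ 0).card
          = (P*Q).support.card := by
            rw [cardlem (P*Q) (d+t+1) hdeg]
            congr 1
            refine Finset.filter_congr fun i _ => ?_
            rw [key]
            rw [← hQexp]
        _ ≤ w := hw
  · rintro ⟨q, hq, hw⟩
    set Q := ∑ j : Fin (t+1), Polynomial.C (q j) * Polynomial.X ^ (j:ℕ) with hQdef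
    have hQc : ∀ j : Fin (t+1), Q.coeff j = q j := by
      intro j
      rw [hQdef, Polynomial.finset_sum_coeff]
      rw [Finset.sum_eq_single j]
      · simp
      · intro b _ hbj
        rw [Polynomial.coeff_C_mul, Polynomial.coeff_X_pow]
        simp [Fin.val_eq_val, Ne.symm hbj]
      · simp
    have hQ : Q ≠ 0 := by
      obtain ⟨j, hj⟩ := Function.ne_iff.mp hq
      intro h0
      apply hj
      rw [← hQc j, h0]; simp
    have hQt : Q.natDegree ≤ t := by
      apply Polynomial.natDegree_sum_le_of_forall_le
      intro j _
      apply le_trans (Polynomial.natDegree_C_mul_le _ _)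
      simpa using Nat.lt_succ_iff.mp j.isLt
    have hK : P * Q ≠ 0 := mul_ne_zero hP hQ
    have hnat : (P * Q).natDegree = d + Q.natDegree := by
      rw [Polynomial.natDegree_mul hP hQ, hPd]
    refine ⟨P * Q, hK, Dvd.intro Q rfl, by omega, ?_⟩
    rw [cardlem (P*Q) (d+t+1) (by omega)]
    calc (Finset.univ.filter fun i : Fin (d+t+1) => (P*Q).coeff i ≠ 0).card
        = (Finset.univ.filter fun i : Fin (d + t + 1) =>
          (toeplitz P d t).mulVec q i ≠ 0).card := by
          congr 1
          refine Finset.filter_congr fun i _ => ?_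
          rw [key]
      _ ≤ w := hw
end
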